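/- Concatenation of convex polygons along a common boundary edge, defined to be the concatenated polygon when convex and zero otherwise, yields an associative product. Precisely: model a 'polygon from p to p'' as a finite strictly decreasing-argument sequence of complex numbers from W(p) to W(p') (with respect to a fixed direction at infinity ζ). If Q ∈ 𝒬_{p,p'} and Q' ∈ 𝒬_{p',p''}, declare Q·Q' = Q ∪ Q' if the concatenated vertex sequence is still convex, and 0 otherwise. Then (Q·Q')·Q'' = Q·(Q'·Q'') for all composable Q, Q', Q'', in the free abelian group on polygons adjoined with 0. -/

import Mathlib

open scoped Classical

/-- A polygon from `p` to `p'` is modelled as the list of its finite vertices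
`W(p) = w₀, w₁, …, w_k = W(p')`; concatenation along the shared endpoint. -/
def concatPoly (q q' : List ℂ) : List ℂ := q ++ q'.tail

/-- The sequence of edges of the polygon obtained by adjoining the vertex at infinity in
direction `ζ`: edge `-ζ` coming down from infinity to `w₀`, then the finite edges, then edge
`ζ` going back to infinity. -/
def edgeSeq (ζ : ℂ) (l : List ℂ) : List ℂ :=
  (-ζ) :: (((l.zip l.tail).map fun p => p.2 - p.1) ++ [ζ])

/-- Convexity with clockwise-ordered vertices: each pair of consecutive edges turns
clockwise (negative cross product `Im(ē·e') < 0`). -/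
def ConvexPoly (ζ : ℂ) (l : List ℂ) : Prop :=
  List.Chain' (fun e e' => (starRingEnd ℂ e * e').im < 0) (edgeSeq ζ l)

/-- Product of two polygons: the concatenation if it is convex, zero (`none`) otherwise. -/
noncomputable def polyMul (ζ : ℂ) (q q' : List ℂ) : Option (List ℂ) :=
  if ConvexPoly ζ (concatPoly q q') then some (concatPoly q q') else none

/-- Extension of the product to the free abelian group on polygons adjoined with zero
(modelled on the `Option` of generators, `none` playing the role of `0`). -/
noncomputable def polyMulOpt (ζ : ℂ) : Option (List ℂ) → Option (List ℂ) → Option (List ℂ)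
  | some q, some q' => polyMul ζ q q'
  | _, _ => none


def pdiffs (l : List ℂ) : List ℂ := (l.zip l.tail).map fun p => p.2 - p.1

lemma edgeSeq_eq (ζ : ℂ) (l : List ℂ) : edgeSeq ζ l = (-ζ) :: (pdiffs l ++ [ζ]) := rfl

lemma pdiffs_append (q q' : List ℂ) (hq' : q' ≠ []) (h : q.getLast? = q'.head?) :
    pdiffs (q ++ q'.tail) = pdiffs q ++ pdiffs q' := by
  induction q with
  | nil =>
    exfalso
    cases q' with
    | nil => exact hq' rfl
    | cons a t => simp at h
  | cons a q ih =>
    cases q with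
    | nil =>
      cases q' with
      | nil => exact absurd rfl hq'
      | cons b t =>
        simp at h
        subst h
        simp [pdiffs]
    | cons b q =>
      rw [List.getLast?_cons_cons] at h
      have := ih h
      simpa [pdiffs, List.cons_append] using this

lemma pdiffs_ne_nil {ζ : ℂ} {l : List ℂ} (h : ConvexPoly ζ l) : pdiffs l ≠ [] := by
  intro hn
  unfold ConvexPoly at h
  rw [edgeSeq_eq, hn] at h
  simp [List.Chain', List.isChain_cons] at h
  linarith

section
variable {α : Type*} {R : α → α → Prop}

lemma chain_mid_left {z w : α} {A B C : List α}
    (hw : List.Chain' R (z :: (A ++ (B ++ (C ++ [w])))))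
    (hB : B ≠ []) (hlast : ∀ x ∈ B.getLast?, R x w) :
    List.Chain' R (z :: (A ++ (B ++ [w]))) := by
  obtain ⟨b, B, rfl⟩ := List.exists_cons_of_ne_nil hB
  unfold List.Chain' at hw ⊢
  rw [List.isChain_cons] at hw ⊢
  obtain ⟨h1, h2⟩ := hw
  rw [List.isChain_append, List.isChain_append, List.isChain_append] at h2
  constructor
  · intro y hy
    apply h1
    simpa [List.head?_append] using (by simpa [List.head?_append] using hy)
  · rw [List.isChain_append, List.isChain_append]
    refine ⟨h2.1, ⟨h2.2.1.1, List.isChain_singleton _, ?_⟩, ?_⟩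
    · intro x hx y hy
      simp at hy; subst hy
      exact hlast x hx
    · intro x hx y hy
      apply h2.2.2 x hx
      simpa [List.head?_append] using hy

lemma chain_mid_right {z w : α} {A B C : List α}
    (hw : List.Chain' R (z :: (A ++ (B ++ (C ++ [w])))))
    (hB : B ≠ []) (hhead : ∀ y ∈ B.head?, R z y) :
    List.Chain' R (z :: (B ++ (C ++ [w]))) := by
  obtain ⟨b, B, rfl⟩ := List.exists_cons_of_ne_nil hB
  unfold List.Chain' at hw ⊢
  rw [List.isChain_cons]
  refine ⟨by simpa using hhead, ?_⟩
  have hsuf : (b :: B ++ (C ++ [w])) <:+ z :: (A ++ (b :: B ++ (C ++ [w]))) :=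
    (List.suffix_append A _).trans (List.suffix_cons z _)
  exact hw.suffix hsuf

end

lemma convex_first_edge {ζ : ℂ} {l : List ℂ} (h : ConvexPoly ζ l) :
    ∀ y ∈ (pdiffs l).head?, (starRingEnd ℂ (-ζ) * y).im < 0 := by
  intro y hy
  unfold ConvexPoly List.Chain' at h
  rw [edgeSeq_eq, List.isChain_cons] at h
  apply h.1
  simp [List.head?_append]
  simp [Option.mem_def.mp hy]

lemma convex_last_edge {ζ : ℂ} {l : List ℂ} (h : ConvexPoly ζ l) :
    ∀ x ∈ (pdiffs l).getLast?, (starRingEnd ℂ x * ζ).im < 0 := by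
  intro x hx
  unfold ConvexPoly List.Chain' at h
  rw [edgeSeq_eq, List.isChain_cons, List.isChain_append] at h
  exact h.2.2.2 x hx ζ rfl

/-- Concatenation of convex polygons along a common boundary edge, defined to
be the concatenated polygon when convex and zero otherwise, is associative:
`(Q·Q')·Q'' = Q·(Q'·Q'')` for all composable convex polygons `Q, Q', Q''`. -/
theorem stmt11 (ζ : ℂ) (hζ : ‖ζ‖ = 1)
    (Q Q' Q'' : List ℂ)
    (hQ : ConvexPoly ζ Q) (hQ' : ConvexPoly ζ Q') (hQ'' : ConvexPoly ζ Q'')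
    (hQne : Q ≠ []) (hQ'ne : Q' ≠ []) (hQ''ne : Q'' ≠ [])
    (h1 : Q.getLast? = Q'.head?) (h2 : Q'.getLast? = Q''.head?) :
    polyMulOpt ζ (polyMul ζ Q Q') (some Q'') =
      polyMulOpt ζ (some Q) (polyMul ζ Q' Q'') := by
  have hB := pdiffs_ne_nil hQ'
  have hQ'Q''ne : concatPoly Q' Q'' ≠ [] := by
    simp only [concatPoly]
    intro h
    exact hQ'ne (List.append_eq_nil_iff.mp h).1
  obtain ⟨a, t, rfl⟩ := List.exists_cons_of_ne_nil hQ'ne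
  have hd : (concatPoly (a :: t) Q'').head? = (a :: t).head? := by
    simp [concatPoly]
  have e12 : pdiffs (concatPoly Q (a :: t)) = pdiffs Q ++ pdiffs (a :: t) :=
    pdiffs_append _ _ hQ'ne h1
  have e23 : pdiffs (concatPoly (a :: t) Q'') = pdiffs (a :: t) ++ pdiffs Q'' :=
    pdiffs_append _ _ hQ''ne h2
  have eW : pdiffs (concatPoly Q (concatPoly (a :: t) Q''))
      = pdiffs Q ++ (pdiffs (a :: t) ++ pdiffs Q'') := by
    exact (pdiffs_append Q _ hQ'Q''ne (h1.trans hd.symm)).trans (by rw [e23])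
  have hWeq : concatPoly (concatPoly Q (a :: t)) Q'' = concatPoly Q (concatPoly (a :: t) Q'') := by
    simp [concatPoly]
  have key2 : ConvexPoly ζ (concatPoly Q (concatPoly (a :: t) Q'')) →
      ConvexPoly ζ (concatPoly Q (a :: t)) := by
    intro h
    unfold ConvexPoly at h ⊢
    rw [edgeSeq_eq, eW] at h
    rw [edgeSeq_eq, e12, List.append_assoc]
    rw [List.append_assoc, List.append_assoc] at h
    exact chain_mid_left h hB (convex_last_edge hQ')
  have key3 : ConvexPoly ζ (concatPoly Q (concatPoly (a :: t) Q'')) →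
      ConvexPoly ζ (concatPoly (a :: t) Q'') := by
    intro h
    unfold ConvexPoly at h ⊢
    rw [edgeSeq_eq, eW] at h
    rw [edgeSeq_eq, e23, List.append_assoc]
    rw [List.append_assoc, List.append_assoc] at h
    exact chain_mid_right h hB (convex_first_edge hQ')
  by_cases c12 : ConvexPoly ζ (concatPoly Q (a :: t))
  · by_cases c23 : ConvexPoly ζ (concatPoly (a :: t) Q'')
    · simp only [polyMul, if_pos c12, if_pos c23, polyMulOpt, hWeq]
    · simp only [polyMul, if_pos c12, if_neg c23, polyMulOpt, hWeq,
        if_neg (fun hW => c23 (key3 hW))]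
  · by_cases c23 : ConvexPoly ζ (concatPoly (a :: t) Q'')
    · simp only [polyMul, if_neg c12, if_pos c23, polyMulOpt,
        if_neg (fun hW => c12 (key2 hW))]
    · simp only [polyMul, if_neg c12, if_neg c23, polyMulOpt]
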